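/- arXiv:1909.11518 — 2 statements merged into one kernel-verified Lean document; each statement's English description precedes it below -/
import Mathlib

section
/- For the Student t distribution with ν > 2 degrees of freedom, the Stein kernel is τ_ν(x) = (x²+ν)/(ν−1); that is, (1/p_ν(x)) ∫_{-∞}^x (−u) p_ν(u) du = (x²+ν)/(ν−1) for all x, where p_ν(x) = (ν/(ν+x²))^{(1+ν)/2} ν^{-1/2}/B(ν/2, 1/2). -/
open Real MeasureTheory Set Filter Topology

set_option maxHeartbeats 1000000 in
/-- The Stein kernel of the Student `t_ν` distribution (ν > 2) is
`τ_ν(x) = (x²+ν)/(ν-1)`: that is, `(1/p_ν(x)) ∫_{-∞}^x (-u) p_ν(u) du = (x²+ν)/(ν-1)`. -/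
theorem stmt18 (ν : ℝ) (hν : 2 < ν) (p : ℝ → ℝ)
    (hp : ∀ x, p x =
      (ν / (ν + x ^ 2)) ^ ((1 + ν) / 2) * ν ^ (-(1 : ℝ) / 2) /
        (Real.Gamma (ν / 2) * Real.Gamma (1 / 2) / Real.Gamma (ν / 2 + 1 / 2))) :
    ∀ x : ℝ, (p x)⁻¹ * ∫ u in Set.Iic x, (-u) * p u = (x ^ 2 + ν) / (ν - 1) := by
  have hν0 : (0:ℝ) < ν := by linarith
  have hν1 : ν - 1 ≠ 0 := by intro h; linarith [sub_eq_zero.mp h]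
  set C : ℝ := ν ^ (-(1 : ℝ) / 2) /
        (Real.Gamma (ν / 2) * Real.Gamma (1 / 2) / Real.Gamma (ν / 2 + 1 / 2)) with hC
  have hCpos : 0 < C := by
    apply div_pos (rpow_pos_of_pos hν0 _)
    apply div_pos (mul_pos (Real.Gamma_pos_of_pos (by linarith)) (Real.Gamma_pos_of_pos (by norm_num)))
      (Real.Gamma_pos_of_pos (by linarith))
  have hpC : ∀ u : ℝ, p u = (ν / (ν + u ^ 2)) ^ ((1 + ν) / 2) * C := by
    intro u; rw [hp u, hC]; ring
  have hden : ∀ u : ℝ, (0:ℝ) < ν + u ^ 2 := fun u => by positivity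
  have hppos : ∀ u : ℝ, 0 < p u := by
    intro u; rw [hpC u]
    exact mul_pos (rpow_pos_of_pos (div_pos hν0 (hden u)) _) hCpos
  have hpalt : ∀ u : ℝ, p u = ν ^ ((1 + ν) / 2) * (ν + u ^ 2) ^ (-((1 + ν) / 2)) * C := by
    intro u
    rw [hpC u, Real.div_rpow hν0.le (hden u).le, Real.rpow_neg (hden u).le, div_eq_mul_inv]
  set K : ℝ := C * ν ^ ((1 + ν) / 2) / (ν - 1) with hK
  have hKpos : 0 < K := div_pos (mul_pos hCpos (rpow_pos_of_pos hν0 _)) (by linarith)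
  set G : ℝ → ℝ := fun u => K * (ν + u ^ 2) ^ (-((ν - 1) / 2)) with hG
  have hGpos : ∀ u, 0 < G u := fun u => mul_pos hKpos (rpow_pos_of_pos (hden u) _)
  have hGderiv : ∀ u : ℝ, HasDerivAt G (-u * p u) u := by
    intro u
    have h1 : HasDerivAt (fun u : ℝ => ν + u ^ 2) (2 * u) u := by
      simpa using ((hasDerivAt_pow 2 u).const_add ν)
    have h2 : HasDerivAt (fun t : ℝ => t ^ (-((ν - 1) / 2)))
        (-((ν - 1) / 2) * (ν + u ^ 2) ^ (-((ν - 1) / 2) - 1)) (ν + u ^ 2) :=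
      Real.hasDerivAt_rpow_const (Or.inl (hden u).ne')
    have h3 := (h2.comp u h1).const_mul K
    have he : -((ν - 1) / 2) - 1 = -((1 + ν) / 2) := by ring
    rw [he] at h3
    refine h3.congr_deriv ?_
    rw [hpalt u, hK, Real.rpow_neg (hden u).le]
    field_simp
  have hGtend : Tendsto G atBot (𝓝 0) := by
    have h1 : Tendsto (fun u : ℝ => ν + u ^ 2) atBot atTop := by
      apply tendsto_atTop_add_const_left
      have h : Tendsto (fun u : ℝ => |u| ^ 2) atBot atTop :=
        (tendsto_pow_atTop (two_ne_zero)).comp tendsto_abs_atBot_atTop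
      simpa [sq_abs] using h
    have h2 : Tendsto (fun t : ℝ => t ^ (-((ν - 1) / 2))) atTop (𝓝 0) :=
      tendsto_rpow_neg_atTop (by linarith)
    simpa using (h2.comp h1).const_mul K
  intro x
  set a : ℝ := min x 0 with ha
  have hax : a ≤ x := min_le_left _ _
  have ha0 : a ≤ 0 := min_le_right _ _
  have hcontp : Continuous p := by
    have : Continuous fun u : ℝ => (ν / (ν + u ^ 2)) ^ ((1 + ν) / 2) := by
      apply Continuous.rpow_const
      · exact continuous_const.div (by continuity) (fun u => (hden u).ne')
      · intro u; left; exact (div_pos hν0 (hden u)).ne'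
    rw [funext hpC]; exact this.mul continuous_const
  have hcontf : Continuous fun u : ℝ => -u * p u := (continuous_neg.comp continuous_id).mul hcontp
  have hint : IntegrableOn (fun u : ℝ => -u * p u) (Iic x) := by
    have hIicA : IntegrableOn (fun u : ℝ => -u * p u) (Iic a) := by
      apply integrableOn_Iic_of_intervalIntegral_norm_bounded (G a) a
        (f := fun u : ℝ => -u * p u) (a := fun y : ℝ => y) (l := atBot)
      · intro y; exact hcontf.integrableOn_Ioc
      · exact tendsto_id
      · filter_upwards [eventually_le_atBot a] with y hy
        have hnn : ∀ u ∈ Icc y a, 0 ≤ -u * p u := by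
          intro u hu
          exact mul_nonneg (by linarith [hu.2, ha0, neg_nonneg.mpr (hu.2.trans ha0)]) (hppos u).le
        have heq : (∫ u in y..a, ‖-u * p u‖) = ∫ u in y..a, -u * p u := by
          apply intervalIntegral.integral_congr
          intro u hu
          rw [Set.uIcc_of_le hy] at hu
          exact Real.norm_of_nonneg (hnn u hu)
        rw [heq, intervalIntegral.integral_eq_sub_of_hasDerivAt (fun u _ => hGderiv u)
          (hcontf.intervalIntegrable _ _)]
        linarith [hGpos y]
    have hIcc : IntegrableOn (fun u : ℝ => -u * p u) (Icc a x) := hcontf.integrableOn_Icc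
    exact (hIicA.union hIcc).mono_set (fun u hu => by
      rcases le_or_gt u a with h | h
      · exact Or.inl h
      · exact Or.inr ⟨h.le, hu⟩)
  have hInt : (∫ u in Set.Iic x, (-u) * p u) = G x - 0 :=
    integral_Iic_of_hasDerivAt_of_tendsto' (fun u _ => hGderiv u) hint hGtend
  rw [hInt, sub_zero, hpalt x]
  simp only [hG, hK]
  have he : -((ν - 1) / 2) = -((1 + ν) / 2) + 1 := by ring
  rw [he, Real.rpow_add (hden x), Real.rpow_one]
  have h1 : (ν:ℝ) ^ ((1 + ν) / 2) ≠ 0 := (rpow_pos_of_pos hν0 _).ne'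
  have h2 : (ν + x ^ 2) ^ (-((1 + ν) / 2)) ≠ 0 := (rpow_pos_of_pos (hden x) _).ne'
  field_simp
  ring
end

section
/- Let X_n be the maximum of n i.i.d. Pareto(α) random variables (cdf F(x) = 1 − x^{-α} for x ≥ 1) rescaled by n^{1/α}, so X_n has density p_n(x) = α x^{-α-1}(1 − x^{-α}/n)^{n-1} for x ≥ n^{-1/α}. With c(x) = x^{α+1} and the operator T_n c(x) = (Δ(c p_n))(x)/p_n(x) one has (1/α) T_n c(x) = ((n−1)/n)(1 − x^{-α}/n)^{-1}, and E[ |1 − (1/α) T_n c(X_n)| ] = (2/(n−1)) (1 − 1/n)^n ≤ (2/e)/(n−1). -/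
open Real MeasureTheory Set Filter

/-- Rescaled maxima of Pareto(α) samples vs Fréchet: `X_n = M_n/n^{1/α}` has density
`p_n(x) = α x^{-α-1}(1 - x^{-α}/n)^{n-1}` on `x ≥ n^{-1/α}`. With `c(x) = x^{α+1}` and
`T_n c(x) = (c p_n)'(x)/p_n(x)` one has
`(1/α) T_n c(x) = ((n-1)/n)(1 - x^{-α}/n)⁻¹` on the interior of the support, and
`E[|1 - (1/α) T_n c(X_n)|] = (2/(n-1))(1 - 1/n)^n ≤ (2/e)/(n-1)`. -/
theorem stmt19 (α : ℝ) (hα : 0 < α) (n : ℕ) (hn : 2 ≤ n) (p : ℝ → ℝ)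
    (hp : ∀ x : ℝ, p x =
      if (n : ℝ) ^ (-(1 : ℝ) / α) ≤ x then
        α * x ^ (-α - 1) * (1 - x ^ (-α) / (n : ℝ)) ^ (n - 1)
      else 0) :
    (∀ x : ℝ, (n : ℝ) ^ (-(1 : ℝ) / α) < x →
      (1 / α) * (deriv (fun y : ℝ => y ^ (α + 1) * p y) x / p x) =
        (((n : ℝ) - 1) / (n : ℝ)) * (1 - x ^ (-α) / (n : ℝ))⁻¹) ∧
    ((∫ x, |1 - (1 / α) * (deriv (fun y : ℝ => y ^ (α + 1) * p y) x / p x)| * p x) =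
        (2 / ((n : ℝ) - 1)) * (1 - 1 / (n : ℝ)) ^ n) ∧
    ((2 / ((n : ℝ) - 1)) * (1 - 1 / (n : ℝ)) ^ n ≤ (2 / Real.exp 1) / ((n : ℝ) - 1)) := by
  have hα' : α ≠ 0 := hα.ne'
  set b : ℝ := (n : ℝ) ^ (-(1 : ℝ) / α) with hbdef
  have hn1 : (1 : ℝ) < n := by exact_mod_cast (by omega : 1 < n)
  have hn0 : (0 : ℝ) < n := by linarith
  have hb0 : 0 < b := rpow_pos_of_pos hn0 _
  have hb1 : b < 1 := rpow_lt_one_of_one_lt_of_neg hn1 (by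
    rw [div_neg_iff]; right; exact ⟨by linarith, hα⟩)
  have hbα : b ^ (-α) = (n : ℝ) := by
    rw [hbdef, ← Real.rpow_mul hn0.le]
    rw [show -(1:ℝ)/α * (-α) = 1 by field_simp]
    exact Real.rpow_one _
  -- basic facts for x > b
  have hxpos : ∀ x : ℝ, b < x → 0 < x := fun x hx => hb0.trans hx
  have hxa : ∀ x : ℝ, b < x → x ^ (-α) < (n : ℝ) := by
    intro x hx
    rw [← hbα]
    exact Real.rpow_lt_rpow_of_neg hb0 hx (by linarith)
  have hupos : ∀ x : ℝ, b < x → 0 < 1 - x ^ (-α) / (n : ℝ) := by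
    intro x hx
    have := hxa x hx
    rw [sub_pos, div_lt_one hn0]; exact this
  -- derivative of u(y) = 1 - y^(-α)/n
  have hu : ∀ x : ℝ, 0 < x →
      HasDerivAt (fun y : ℝ => 1 - y ^ (-α) / (n : ℝ)) (α * x ^ (-α - 1) / n) x := by
    intro x hx
    have h1 : HasDerivAt (fun y : ℝ => y ^ (-α)) (-α * x ^ (-α - 1)) x := by
      simpa using Real.hasDerivAt_rpow_const (p := -α) (Or.inl hx.ne')
    have := (h1.div_const (n : ℝ)).const_sub 1
    refine this.congr_deriv ?_; ring
  -- derivative of Φ(x) = u^n - u^(n-1)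
  set u : ℝ → ℝ := fun x => 1 - x ^ (-α) / (n : ℝ) with hudef
  set Φ : ℝ → ℝ := fun x => u x ^ n - u x ^ (n - 1) with hΦdef
  set φ : ℝ → ℝ := fun x => (1 - x ^ (-α)) * u x ^ (n - 2) * (α * x ^ (-α - 1) / n) with hφdef
  have hpowu : ∀ x : ℝ, u x ^ (n - 1) = u x ^ (n - 2) * u x := by
    intro x
    rw [← pow_succ]
    congr 1; omega
  have hΦderiv : ∀ x : ℝ, 0 < x → HasDerivAt Φ (φ x) x := by
    intro x hx
    have h1 := ((hu x hx).pow n).sub ((hu x hx).pow (n - 1))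
    refine h1.congr_deriv ?_
    have h3 : n - 1 - 1 = n - 2 := by omega
    have hx' : (1 : ℝ) - x ^ (-α) = (n : ℝ) * u x - ((n : ℝ) - 1) := by
      rw [hudef]; field_simp; ring
    simp only [hφdef, hΦdef]
    rw [hx', hpowu x, h3]
    push_cast [Nat.cast_sub (by omega : 1 ≤ n)]
    ring
  -- derivative of c * p for x > b
  have hderivcp : ∀ x : ℝ, b < x →
      deriv (fun y : ℝ => y ^ (α + 1) * p y) x
        = α * (((n - 1 : ℕ) : ℝ) * u x ^ (n - 2) * (α * x ^ (-α - 1) / n)) := by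
    intro x hx
    have heq : (fun y : ℝ => y ^ (α + 1) * p y) =ᶠ[nhds x]
        (fun y : ℝ => α * u y ^ (n - 1)) := by
      filter_upwards [IsOpen.mem_nhds isOpen_Ioi hx] with y hy
      have hy0 : 0 < y := hxpos y hy
      rw [hp y, if_pos (le_of_lt hy)]
      have h1 : y ^ (α + 1) * y ^ (-α - 1) = 1 := by
        rw [← Real.rpow_add hy0]
        norm_num
      calc y ^ (α + 1) * (α * y ^ (-α - 1) * u y ^ (n - 1))
          = (y ^ (α + 1) * y ^ (-α - 1)) * (α * u y ^ (n - 1)) := by ring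
        _ = α * u y ^ (n - 1) := by rw [h1, one_mul]
    rw [heq.deriv_eq]
    have h1 : HasDerivAt (fun y : ℝ => α * u y ^ (n - 1))
        (α * (((n - 1 : ℕ) : ℝ) * u x ^ (n - 1 - 1) * (α * x ^ (-α - 1) / n))) x :=
      ((hu x (hxpos x hx)).pow (n - 1)).const_mul α
    rw [h1.deriv, show n - 1 - 1 = n - 2 from by omega]
  -- Part 1
  have part1 : ∀ x : ℝ, b < x →
      (1 / α) * (deriv (fun y : ℝ => y ^ (α + 1) * p y) x / p x) =
        (((n : ℝ) - 1) / (n : ℝ)) * (u x)⁻¹ := by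
    intro x hx
    have hx0 : 0 < x := hxpos x hx
    have hxr : (0 : ℝ) < x ^ (-α - 1) := Real.rpow_pos_of_pos hx0 _
    have hu0 : 0 < u x := hupos x hx
    have hnt : (n : ℝ) - x ^ (-α) ≠ 0 := ne_of_gt (by have := hxa x hx; linarith)
    rw [hderivcp x hx, hp x, if_pos (le_of_lt hx)]
    have hc : ((n - 1 : ℕ) : ℝ) = (n : ℝ) - 1 := by
      rw [Nat.cast_sub (by omega)]; norm_num
    rw [hc, hpowu x]
    field_simp [hnt]
  refine ⟨fun x hx => part1 x hx, ?_, ?_⟩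
  · -- the integral computation
    set g : ℝ → ℝ := fun x =>
      |1 - x ^ (-α)| * u x ^ (n - 2) * (α * x ^ (-α - 1) / n) with hgdef
    -- pointwise identity of the integrand on Ioi b
    have hpoint : ∀ x : ℝ, b < x →
        |1 - (1 / α) * (deriv (fun y : ℝ => y ^ (α + 1) * p y) x / p x)| * p x = g x := by
      intro x hx
      have hx0 : 0 < x := hxpos x hx
      have hxr : (0 : ℝ) < x ^ (-α - 1) := Real.rpow_pos_of_pos hx0 _
      have hu0 : 0 < u x := hupos x hx
      have hnt : (n : ℝ) - x ^ (-α) ≠ 0 := ne_of_gt (by have := hxa x hx; linarith)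
      rw [part1 x hx, hp x, if_pos (le_of_lt hx)]
      have h1 : 1 - ((n : ℝ) - 1) / (n : ℝ) * (u x)⁻¹ = (1 - x ^ (-α)) / ((n : ℝ) * u x) := by
        rw [hudef]; field_simp; ring
      rw [h1, abs_div, abs_of_pos (by positivity : (0:ℝ) < (n : ℝ) * u x), hpowu x]
      simp only [hgdef]
      field_simp
    have hzero : ∀ x : ℝ, x < b →
        |1 - (1 / α) * (deriv (fun y : ℝ => y ^ (α + 1) * p y) x / p x)| * p x = 0 := by
      intro x hx
      rw [hp x, if_neg (not_le.mpr hx), mul_zero]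
    -- rewrite the integral as a set integral of g over Ioi b
    have hae : (fun x => |1 - (1 / α) * (deriv (fun y : ℝ => y ^ (α + 1) * p y) x / p x)| * p x)
        =ᵐ[volume] (Ioi b).indicator g := by
      have hsing : ∀ᵐ x : ℝ, x ≠ b := by
        rw [ae_iff]
        simp only [ne_eq, not_not]
        simpa using volume_singleton (a := b)
      filter_upwards [hsing] with x hxb
      rcases lt_trichotomy x b with h | h | h
      · rw [hzero x h, indicator_of_notMem (by simp [h.not_gt] : x ∉ Ioi b)]
      · exact absurd h hxb
      · rw [hpoint x h, indicator_of_mem (mem_Ioi.mpr h)]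
    rw [integral_congr_ae hae, integral_indicator measurableSet_Ioi]
    -- split the integral
    have hsplit : Ioi b = Ioc b 1 ∪ Ioi (1 : ℝ) := (Ioc_union_Ioi_eq_Ioi hb1.le).symm
    -- continuity of g and φ on Ici b
    have hid : ∀ x ∈ Ici b, x ≠ 0 := fun x hx => (lt_of_lt_of_le hb0 hx).ne'
    have h1c : ContinuousOn (fun x : ℝ => x ^ (-α)) (Ici b) :=
      continuousOn_id.rpow_const (fun x hx => Or.inl (hid x hx))
    have h2c : ContinuousOn (fun x : ℝ => x ^ (-α - 1)) (Ici b) :=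
      continuousOn_id.rpow_const (fun x hx => Or.inl (hid x hx))
    have h3c : ContinuousOn u (Ici b) := continuousOn_const.sub (h1c.div_const _)
    have hgcont : ContinuousOn g (Ici b) :=
      ((continuous_abs.comp_continuousOn (continuousOn_const.sub h1c)).mul
        (h3c.pow _)).mul ((continuousOn_const.mul h2c).div_const _)
    have hφcont : ContinuousOn φ (Ici b) :=
      (((continuousOn_const.sub h1c)).mul
        (h3c.pow _)).mul ((continuousOn_const.mul h2c).div_const _)
    -- g coincides with -φ on Icc b 1 and with φ on Ici 1
    have hgφ1 : ∀ x ∈ Icc b 1, g x = -φ x := by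
      intro x hx
      have hx0 : 0 < x := lt_of_lt_of_le hb0 hx.1
      have hxge : 1 ≤ x ^ (-α) :=
        Real.one_le_rpow_of_pos_of_le_one_of_nonpos hx0 hx.2 (by linarith)
      simp only [hgdef, hφdef]
      rw [abs_of_nonpos (by linarith)]
      ring
    have hgφ2 : ∀ x ∈ Ici (1:ℝ), g x = φ x := by
      intro x hx
      have hxle : x ^ (-α) ≤ 1 := Real.rpow_le_one_of_one_le_of_nonpos hx (by linarith)
      simp only [hgdef, hφdef]
      rw [abs_of_nonneg (by linarith)]
    -- value of Φ at b, 1 and at infinity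
    have hΦb : Φ b = 0 := by
      have hub : u b = 0 := by rw [hudef]; simp only [hbα]; field_simp; ring
      simp only [hΦdef, hub]
      rw [zero_pow (by omega), zero_pow (by omega), sub_zero]
    have hΦ1 : Φ 1 = (1 - 1/(n:ℝ)) ^ n - (1 - 1/(n:ℝ)) ^ (n-1) := by
      have hu1 : u 1 = 1 - 1/(n:ℝ) := by rw [hudef]; simp [Real.one_rpow]
      simp only [hΦdef, hu1]
    have hΦtop : Tendsto Φ atTop (nhds 0) := by
      have h1 : Tendsto (fun x : ℝ => x ^ (-α)) atTop (nhds 0) := tendsto_rpow_neg_atTop hα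
      have h2 : Tendsto u atTop (nhds 1) := by
        have := (h1.div_const (n:ℝ)).const_sub 1
        simpa using this
      have h3 := (h2.pow n).sub (h2.pow (n-1))
      simpa using h3
    have hφnonneg : ∀ x ∈ Ioi (1:ℝ), 0 ≤ φ x := by
      intro x hx
      rw [← hgφ2 x (mem_Ici.mpr (le_of_lt hx))]
      have hu0 : 0 ≤ u x := (hupos x (hb1.trans hx)).le
      have hx0 : 0 < x := one_pos.trans hx
      have hxr : (0:ℝ) ≤ x ^ (-α - 1) := (Real.rpow_pos_of_pos hx0 _).le
      exact mul_nonneg (mul_nonneg (abs_nonneg _) (pow_nonneg hu0 _))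
        (by positivity)
    -- integral over Ioi 1
    have hIoi1 : ∫ x in Ioi (1:ℝ), g x = - Φ 1 := by
      rw [setIntegral_congr_fun measurableSet_Ioi (fun x hx => hgφ2 x (le_of_lt hx))]
      rw [integral_Ioi_of_hasDerivAt_of_nonneg'
        (fun x hx => hΦderiv x (lt_of_lt_of_le one_pos hx)) hφnonneg hΦtop]
      ring
    -- integral over Ioc b 1
    have hIoc : ∫ x in Ioc b (1:ℝ), g x = - Φ 1 := by
      rw [← intervalIntegral.integral_of_le hb1.le]
      rw [intervalIntegral.integral_congr (g := fun x => -φ x)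
        (by rw [uIcc_of_le hb1.le]; exact hgφ1)]
      have hd : ∀ x ∈ uIcc b (1:ℝ), HasDerivAt (fun y => -Φ y) (-φ x) x := by
        intro x hx
        rw [uIcc_of_le hb1.le] at hx
        exact (hΦderiv x (lt_of_lt_of_le hb0 hx.1)).neg
      have hint : IntervalIntegrable (fun x => -φ x) volume b 1 := by
        apply ContinuousOn.intervalIntegrable
        rw [uIcc_of_le hb1.le]
        exact (hφcont.mono (Icc_subset_Ici_self)).neg
      rw [intervalIntegral.integral_eq_sub_of_hasDerivAt hd hint]
      rw [hΦb]; ring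
    -- integrability on the pieces
    have intIoc : IntegrableOn g (Ioc b 1) volume :=
      ((hgcont.mono Icc_subset_Ici_self).integrableOn_Icc).mono_set Ioc_subset_Icc_self
    have intIoi : IntegrableOn g (Ioi 1) volume := by
      exact (integrableOn_congr_fun (fun x hx => hgφ2 x (le_of_lt hx))
          measurableSet_Ioi).mpr <|
        integrableOn_Ioi_deriv_of_nonneg'
        (fun x hx => hΦderiv x (lt_of_lt_of_le one_pos hx)) hφnonneg hΦtop
    rw [hsplit, setIntegral_union (Ioc_disjoint_Ioi le_rfl) measurableSet_Ioi intIoc intIoi,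
      hIoc, hIoi1, hΦ1]
    -- final arithmetic
    have hpow : (1 - 1/(n:ℝ)) ^ n = (1 - 1/(n:ℝ)) ^ (n-1) * (1 - 1/(n:ℝ)) := by
      rw [← pow_succ]; congr 1; omega
    have hn1' : (n:ℝ) - 1 ≠ 0 := by intro h; linarith
    rw [hpow]
    field_simp
    ring
  · -- the bound
    have hexp : (1 - 1/(n:ℝ)) ^ n ≤ (Real.exp 1)⁻¹ := by
      have h1 : 1 - 1/(n:ℝ) ≤ Real.exp (-(1/(n:ℝ))) := by
        have := Real.add_one_le_exp (-(1/(n:ℝ)))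
        linarith
      have h0 : (0:ℝ) ≤ 1 - 1/(n:ℝ) := by
        rw [sub_nonneg, div_le_one hn0]; linarith
      calc (1 - 1/(n:ℝ)) ^ n ≤ (Real.exp (-(1/(n:ℝ)))) ^ n := pow_le_pow_left₀ h0 h1 n
        _ = Real.exp ((n:ℝ) * (-(1/(n:ℝ)))) := by rw [← Real.exp_nat_mul]
        _ = Real.exp (-1) := by congr 1; field_simp
        _ = (Real.exp 1)⁻¹ := by rw [Real.exp_neg]
    have hn1' : (0:ℝ) < (n:ℝ) - 1 := by linarith
    calc 2 / ((n:ℝ) - 1) * (1 - 1/(n:ℝ)) ^ n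
        ≤ 2 / ((n:ℝ) - 1) * (Real.exp 1)⁻¹ := by
          apply mul_le_mul_of_nonneg_left hexp (by positivity)
      _ = (2 / Real.exp 1) / ((n:ℝ) - 1) := by
          rw [div_div]
          field_simp
end
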